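/- Let $q \in \mathbb{C}^{\times}$, $q \neq -1$, $q^2 \neq -1$ (generic). The variety $X \subset \mathbb{C}^4 \times (\mathbb{C}^{\times})^2$ with coordinates $(u_1,v_1,u_2,v_2,Z_1,Z_2)$ defined by $u_1 v_1 = (1+Z_1)(1 + q Z_1^{-1} Z_2^{-1})$ and $u_2 v_2 = (1+Z_2)(1 + q Z_1^{-1} Z_2^{-1})$ is singular at every point of the locus $\{Z_1 = -1,\ Z_2 = q,\ u_1 = v_1 = 0\}$. -/

import Mathlib

theorem stmt_12 (q : ℂ) (hq0 : q ≠ 0) (hq1 : q ≠ -1) (hq2 : q ^ 2 ≠ -1)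
    (u₂ v₂ : ℂ)
    (h : u₂ * v₂ = (1 + q) * (1 + q * (-1 : ℂ)⁻¹ * q⁻¹)) :
    ¬ Function.Surjective
      (fderiv ℂ (fun P : ℂ × ℂ × ℂ × ℂ × ℂ × ℂ =>
        (P.1 * P.2.1 -
            (1 + P.2.2.2.2.1) * (1 + q * P.2.2.2.2.1⁻¹ * P.2.2.2.2.2⁻¹),
         P.2.2.1 * P.2.2.2.1 -
            (1 + P.2.2.2.2.2) * (1 + q * P.2.2.2.2.1⁻¹ * P.2.2.2.2.2⁻¹)))
        ((0 : ℂ), (0 : ℂ), u₂, v₂, (-1 : ℂ), q)) := by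
  set pt : ℂ × ℂ × ℂ × ℂ × ℂ × ℂ := ((0 : ℂ), (0 : ℂ), u₂, v₂, (-1 : ℂ), q) with hpt
  -- projections
  have hP1 : HasFDerivAt (fun P : ℂ × ℂ × ℂ × ℂ × ℂ × ℂ => P.1) _ pt := hasFDerivAt_fst (𝕜 := ℂ)
  have hP21 := (hasFDerivAt_snd (𝕜 := ℂ) (p := pt)).fst
  have hP221 := (hasFDerivAt_snd (𝕜 := ℂ) (p := pt)).snd.fst
  have hP2221 := (hasFDerivAt_snd (𝕜 := ℂ) (p := pt)).snd.snd.fst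
  have hZ1 := (hasFDerivAt_snd (𝕜 := ℂ) (p := pt)).snd.snd.snd.fst
  have hZ2 := (hasFDerivAt_snd (𝕜 := ℂ) (p := pt)).snd.snd.snd.snd
  have hZ1ne : pt.2.2.2.2.1 ≠ 0 := by simp [hpt]
  have hZ2ne : pt.2.2.2.2.2 ≠ 0 := by simpa [hpt] using hq0
  have hZ1inv : HasFDerivAt (fun P : ℂ × ℂ × ℂ × ℂ × ℂ × ℂ => P.2.2.2.2.1⁻¹) _ pt :=
    (hasFDerivAt_inv' (𝕜 := ℂ) hZ1ne).comp pt hZ1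
  have hZ2inv : HasFDerivAt (fun P : ℂ × ℂ × ℂ × ℂ × ℂ × ℂ => P.2.2.2.2.2⁻¹) _ pt :=
    (hasFDerivAt_inv' (𝕜 := ℂ) hZ2ne).comp pt hZ2
  -- common factor g = 1 + q * Z1⁻¹ * Z2⁻¹
  have hg := (((hZ1inv.const_mul q).mul hZ2inv).const_add 1)
  have hg1 := hZ1.const_add 1
  have hg2 := hZ2.const_add 1
  have hA := hP1.mul hP21
  have hB := hg1.mul hg
  have h1 := hA.sub hB
  have hC := hP221.mul hP2221
  have hD := hg2.mul hg
  have h2 := hC.sub hD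
  have hF : HasFDerivAt (fun P : ℂ × ℂ × ℂ × ℂ × ℂ × ℂ =>
      (P.1 * P.2.1 -
          (1 + P.2.2.2.2.1) * (1 + q * P.2.2.2.2.1⁻¹ * P.2.2.2.2.2⁻¹),
       P.2.2.1 * P.2.2.2.1 -
          (1 + P.2.2.2.2.2) * (1 + q * P.2.2.2.2.1⁻¹ * P.2.2.2.2.2⁻¹))) _ pt :=
    HasFDerivAt.prodMk h1 h2
  rw [hF.fderiv]
  intro hs
  obtain ⟨x, hx⟩ := hs (1, 0)
  have h0 := congrArg Prod.fst hx
  simp only [ContinuousLinearMap.prod_apply, ContinuousLinearMap.sub_apply,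
    ContinuousLinearMap.add_apply, ContinuousLinearMap.smul_apply, hpt] at h0
  norm_num [mul_inv_cancel₀ hq0] at h0
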